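/- In the induction of the main theorem: if u(P_j) ⊆ Lie({H_δ} ∪ u(C)) and infection spreads from P_j onto P_{j+1} \ P_j via edge E with E^{(j)} := E ∩ P_j, then [H_E, u(E^{(j)})] = [H_δ, u(E^{(j)})] − Σ_{F ∈ ℰ, F ⊆ P_j} [H_F, u(E^{(j)})], and hence [H_E, u(E^{(j)})] ⊆ Lie({H_δ} ∪ u(C)). -/

import Mathlib

open scoped Classical

lemma sum_lie_aux {ι L : Type*} [LieRing L]
    (s : Finset ι) (f : ι → L) (x : L) :
    ⁅∑ i ∈ s, f i, x⁆ = ∑ i ∈ s, ⁅f i, x⁆ := by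
  induction s using Finset.induction with
  | empty => simp
  | insert a s h ih => rw [Finset.sum_insert h, Finset.sum_insert h, add_lie, ih]

/-- The induction step of the main theorem: if `u(P_j) ⊆ Lie({H_δ} ∪ u(C))` and the
infection spreads from `P_j` onto `P_{j+1} \ P_j` via the edge `E`, then with
`E^{(j)} = E ∩ P_j` we have
`[H_E, x] = [H_δ, x] - Σ_{F ∈ ℰ, F ⊆ P_j} [H_F, x]` for `x ∈ u(E^{(j)})`, and hence
`[H_E, u(E^{(j)})] ⊆ Lie({H_δ} ∪ u(C))`. -/
theorem stmt10 {α : Type*} {R L : Type*} [CommRing R] [LieRing L] [LieAlgebra R L]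
    (u : Set α → LieSubalgebra R L)
    (ℰ : Finset (Set α)) (H : Set α → L) (Hδ : L)
    (hHδ : Hδ = ∑ F ∈ ℰ, H F)
    (E Pj Pj1 C : Set α) (hE : E ∈ ℰ)
    (hmono : u (E ∩ Pj) ≤ u Pj)
    (hspread1 : (E ∩ Pj).Nonempty) (hspread2 : E \ Pj = Pj1 \ Pj)
    (hPne : (Pj1 \ Pj).Nonempty)
    (hside : ∀ F ∈ ℰ, (F ∩ (E ∩ Pj)).Nonempty → F = E ∨ F ⊆ Pj)
    (hcomm : ∀ F ∈ ℰ, F ∩ (E ∩ Pj) = ∅ → ∀ x ∈ u (E ∩ Pj), ⁅H F, x⁆ = 0)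
    (hloc : ∀ F ∈ ℰ, F ⊆ Pj → ∀ x ∈ u (E ∩ Pj), ⁅H F, x⁆ ∈ u Pj)
    (hind : u Pj ≤ LieSubalgebra.lieSpan R L ({Hδ} ∪ (u C : Set L))) :
    (∀ x ∈ u (E ∩ Pj),
      ⁅H E, x⁆ = ⁅Hδ, x⁆ - ∑ F ∈ ℰ.filter (fun F => F ⊆ Pj), ⁅H F, x⁆) ∧
    ∀ x ∈ u (E ∩ Pj),
      ⁅H E, x⁆ ∈ LieSubalgebra.lieSpan R L ({Hδ} ∪ (u C : Set L)) := by

  have key : ∀ x ∈ u (E ∩ Pj),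
      ⁅H E, x⁆ = ⁅Hδ, x⁆ - ∑ F ∈ ℰ.filter (fun F => F ⊆ Pj), ⁅H F, x⁆ := by
    intro x hx
    have hEnot : ¬ E ⊆ Pj := by
      intro h
      obtain ⟨a, ha⟩ := hPne
      rw [← hspread2] at ha
      exact ha.2 (h ha.1)
    have hsum : ⁅Hδ, x⁆ = ∑ F ∈ ℰ, ⁅H F, x⁆ := by
      rw [hHδ, sum_lie_aux]
    have hsplit := Finset.sum_filter_add_sum_filter_not ℰ (fun F => F ⊆ Pj)
      (fun F => ⁅H F, x⁆)
    have h2 : ∑ F ∈ ℰ.filter (fun F => ¬ F ⊆ Pj), ⁅H F, x⁆ = ⁅H E, x⁆ := by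
      apply Finset.sum_eq_single_of_mem E (Finset.mem_filter.2 ⟨hE, hEnot⟩)
      intro F hF hFE
      obtain ⟨hFℰ, hFn⟩ := Finset.mem_filter.1 hF
      by_cases hne : (F ∩ (E ∩ Pj)).Nonempty
      · rcases hside F hFℰ hne with h | h
        · exact absurd h hFE
        · exact absurd h hFn
      · exact hcomm F hFℰ (Set.not_nonempty_iff_eq_empty.1 hne) x hx
    rw [hsum, ← hsplit, h2]
    abel
  refine ⟨key, fun x hx => ?_⟩
  rw [key x hx]
  have hxS : x ∈ LieSubalgebra.lieSpan R L ({Hδ} ∪ (u C : Set L)) :=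
    hind (hmono hx)
  have hHδS : Hδ ∈ LieSubalgebra.lieSpan R L ({Hδ} ∪ (u C : Set L)) :=
    LieSubalgebra.subset_lieSpan (Set.mem_union_left _ rfl)
  refine sub_mem (LieSubalgebra.lie_mem _ hHδS hxS) (sum_mem fun F hF => ?_)
  obtain ⟨hFℰ, hFP⟩ := Finset.mem_filter.1 hF
  exact hind (hloc F hFℰ hFP x hx)
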